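/- Let 0 < r ≤ 1 with 1/r not an integer, k = ⌊1/r⌋, and for large n set m = n − k⌈rn⌉ and l = (k+1)⌈rn⌉ − n. Define q(β,α) = min{ Σ_i ω(α·β_i, α) : β_i positive integers with Σ β_i = β }. Then Q(n, ⌈rn⌉) ≤ q(l,k) + q(m,k+1). -/

import Mathlib

open SimpleGraph

/-- The independence number of a graph: clique number of the complement. -/
noncomputable def indepNum {V : Type*} (G : SimpleGraph V) : ℕ := Gᶜ.cliqueNum

/-- The chromatic number of a graph, as a natural number. -/
noncomputable def chi {V : Type*} (G : SimpleGraph V) : ℕ := G.chromaticNumber.toNat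

/-- The inverse Ramsey number ω(n,k): minimum clique number over graphs on
`n` vertices with independence number at most `k`. -/
noncomputable def invRamsey (n k : ℕ) : ℕ :=
  sInf {w | ∃ G : SimpleGraph (Fin n), _root_.indepNum G ≤ k ∧ G.cliqueNum = w}

/-- Q(n,c): minimum clique number over graphs on `n` vertices with chromatic number `c`. -/
noncomputable def Q (n c : ℕ) : ℕ :=
  sInf {w | ∃ G : SimpleGraph (Fin n), chi G = c ∧ G.cliqueNum = w}

/-- q(β,α): minimum of Σ ω(α·βᵢ, α) over partitions of β into positive integers βᵢ. -/
noncomputable def qfun (β α : ℕ) : ℕ :=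
  sInf {s | ∃ L : List ℕ, (∀ b ∈ L, 0 < b) ∧ L.sum = β ∧
    (L.map fun b => invRamsey (α * b) α).sum = s}

set_option linter.unusedSectionVars false
set_option maxHeartbeats 1000000

section basics
variable {V W : Type*} [Fintype V] [Fintype W]

lemma chi_colorable (G : SimpleGraph V) : G.Colorable (chi G) :=
  G.colorable_chromaticNumber_of_fintype

lemma chi_le_of_colorable {G : SimpleGraph V} {n : ℕ} (hc : G.Colorable n) : chi G ≤ n := by
  have h := hc.chromaticNumber_eq_sInf
  unfold chi
  rw [h]
  simpa using Nat.sInf_le hc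

lemma cliqueNum_mono {G H : SimpleGraph V} (h : G ≤ H) : G.cliqueNum ≤ H.cliqueNum := by
  obtain ⟨s, hs⟩ := G.exists_isNClique_cliqueNum
  rw [← hs.card_eq]
  exact IsClique.card_le_cliqueNum (tc := hs.isClique.mono h)

lemma cliqueNum_le_of_iso {G : SimpleGraph V} {H : SimpleGraph W} (e : G ≃g H) :
    G.cliqueNum ≤ H.cliqueNum := by
  classical
  obtain ⟨s, hs⟩ := G.exists_isNClique_cliqueNum
  rw [← hs.card_eq, ← Finset.card_map ⟨e, e.toEmbedding.injective⟩]
  refine IsClique.card_le_cliqueNum (tc := ?_)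
  intro x hx y hy hxy
  simp only [Finset.coe_map, Set.mem_image, Finset.mem_coe] at hx hy
  obtain ⟨a, ha, rfl⟩ := hx
  obtain ⟨b, hb, rfl⟩ := hy
  have hab : a ≠ b := fun hh => hxy (by rw [hh])
  exact e.map_adj_iff.2 (hs.isClique ha hb hab)

lemma chi_eq_of_iso {G : SimpleGraph V} {H : SimpleGraph W} (e : G ≃g H) : chi G = chi H := by
  refine le_antisymm (chi_le_of_colorable (Colorable.of_hom e.toEmbedding.toHom (chi_colorable H)))
    (chi_le_of_colorable (Colorable.of_hom e.symm.toEmbedding.toHom (chi_colorable G)))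

lemma card_le_chi_mul_indep (G : SimpleGraph V) :
    Fintype.card V ≤ chi G * _root_.indepNum G := by
  classical
  obtain ⟨C⟩ := chi_colorable G
  have hcard : Fintype.card V = ∑ c : Fin (chi G), (Finset.univ.filter fun v => C v = c).card := by
    rw [← Finset.card_univ]
    exact Finset.card_eq_sum_card_fiberwise (fun x _ => Finset.mem_univ (C x))
  rw [hcard]
  have hbound : ∀ c : Fin (chi G), (Finset.univ.filter fun v => C v = c).card ≤ _root_.indepNum G := by
    intro c
    refine IsClique.card_le_cliqueNum (tc := ?_)
    intro x hx y hy hxy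
    simp only [Finset.coe_filter, Set.mem_setOf_eq] at hx hy
    rw [compl_adj]
    refine ⟨hxy, fun hadj => ?_⟩
    exact C.valid hadj (hx.2.trans hy.2.symm)
  calc ∑ c : Fin (chi G), (Finset.univ.filter fun v => C v = c).card
      ≤ ∑ _c : Fin (chi G), _root_.indepNum G := Finset.sum_le_sum fun c _ => hbound c
    _ = chi G * _root_.indepNum G := by simp [Finset.sum_const, Finset.card_univ]

end basics

section join
variable {A B : Type*} [Fintype A] [Fintype B]

def joinGraph (G₁ : SimpleGraph A) (G₂ : SimpleGraph B) : SimpleGraph (A ⊕ B) where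
  Adj x y := match x, y with
    | .inl a, .inl a' => G₁.Adj a a'
    | .inr b, .inr b' => G₂.Adj b b'
    | .inl _, .inr _ => True
    | .inr _, .inl _ => True
  symm := ⟨by rintro (a | b) (a' | b') h <;> simp_all <;> exact h.symm⟩
  loopless := ⟨by rintro (a | b) h <;> exact (SimpleGraph.irrefl _) h⟩

lemma joinGraph_cliqueNum_le (G₁ : SimpleGraph A) (G₂ : SimpleGraph B) :
    (joinGraph G₁ G₂).cliqueNum ≤ G₁.cliqueNum + G₂.cliqueNum := by
  classical
  obtain ⟨s, hs⟩ := (joinGraph G₁ G₂).exists_isNClique_cliqueNum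
  rw [← hs.card_eq, ← Finset.card_toLeft_add_card_toRight]
  have h1 : s.toLeft.card ≤ G₁.cliqueNum := by
    refine IsClique.card_le_cliqueNum (tc := ?_)
    intro x hx y hy hxy
    have hx' := Finset.mem_toLeft.1 hx
    have hy' := Finset.mem_toLeft.1 hy
    exact hs.isClique hx' hy' (by simpa using hxy)
  have h2 : s.toRight.card ≤ G₂.cliqueNum := by
    refine IsClique.card_le_cliqueNum (tc := ?_)
    intro x hx y hy hxy
    have hx' := Finset.mem_toRight.1 hx
    have hy' := Finset.mem_toRight.1 hy
    exact hs.isClique hx' hy' (by simpa using hxy)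
  omega

lemma joinGraph_chi_ge (G₁ : SimpleGraph A) (G₂ : SimpleGraph B) :
    chi G₁ + chi G₂ ≤ chi (joinGraph G₁ G₂) := by
  classical
  obtain ⟨C⟩ := chi_colorable (joinGraph G₁ G₂)
  set N := chi (joinGraph G₁ G₂)
  set S₁ : Finset (Fin N) := Finset.univ.image fun a : A => C (Sum.inl a) with hS₁
  set S₂ : Finset (Fin N) := Finset.univ.image fun b : B => C (Sum.inr b) with hS₂
  have hdisj : Disjoint S₁ S₂ := by
    rw [Finset.disjoint_left]
    intro c hc1 hc2
    simp only [hS₁, hS₂, Finset.mem_image, Finset.mem_univ, true_and] at hc1 hc2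
    obtain ⟨a, ha⟩ := hc1
    obtain ⟨b, hb⟩ := hc2
    exact C.valid (show (joinGraph G₁ G₂).Adj (Sum.inl a) (Sum.inr b) from trivial)
      (ha.trans hb.symm)
  have hchi1 : chi G₁ ≤ S₁.card := by
    have : G₁.Colorable (Fintype.card S₁) := by
      refine Coloring.colorable (Coloring.mk (fun a => (⟨C (Sum.inl a), ?_⟩ : S₁)) ?_)
      · simp [hS₁]
      · intro a a' hadj h
        exact C.valid (show (joinGraph G₁ G₂).Adj (Sum.inl a) (Sum.inl a') from hadj)
          (by simpa using congrArg Subtype.val h)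
    simpa [Fintype.card_coe] using chi_le_of_colorable this
  have hchi2 : chi G₂ ≤ S₂.card := by
    have : G₂.Colorable (Fintype.card S₂) := by
      refine Coloring.colorable (Coloring.mk (fun b => (⟨C (Sum.inr b), ?_⟩ : S₂)) ?_)
      · simp [hS₂]
      · intro b b' hadj h
        exact C.valid (show (joinGraph G₁ G₂).Adj (Sum.inr b) (Sum.inr b') from hadj)
          (by simpa using congrArg Subtype.val h)
    simpa [Fintype.card_coe] using chi_le_of_colorable this
  have hcard : S₁.card + S₂.card ≤ N := by
    rw [← Finset.card_union_of_disjoint hdisj]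
    simpa using Finset.card_le_card (S₁ ∪ S₂).subset_univ
  omega


end join

section del
variable {V : Type*} [Fintype V]

lemma colorable_succ_of_delete {G : SimpleGraph V} {u v : V} (h : G.Adj u v) {n : ℕ}
    (hc : (G \ fromEdgeSet {s(u, v)}).Colorable n) : G.Colorable (n + 1) := by
  classical
  obtain ⟨C⟩ := hc
  refine ⟨Coloring.mk (fun x => if x = u then Fin.last n else (C x).castSucc) ?_⟩
  intro x y hadj heq
  by_cases hx : x = u
  · have hy : y ≠ u := fun hh => G.irrefl ((hx.trans hh.symm) ▸ hadj)
    rw [if_pos hx, if_neg hy] at heq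
    exact (Fin.castSucc_lt_last (C y)).ne' heq
  · by_cases hy : y = u
    · rw [if_neg hx, if_pos hy] at heq
      exact (Fin.castSucc_lt_last (C x)).ne heq
    · rw [if_neg hx, if_neg hy] at heq
      have hadj' : (G \ fromEdgeSet {s(u, v)}).Adj x y := by
        rw [sdiff_adj]
        refine ⟨hadj, ?_⟩
        rw [fromEdgeSet_adj]
        rintro ⟨hmem, -⟩
        simp only [Set.mem_singleton_iff, Sym2.eq_iff] at hmem
        rcases hmem with ⟨rfl, rfl⟩ | ⟨rfl, rfl⟩
        · exact hx rfl
        · exact hy rfl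
      exact C.valid hadj' (Fin.castSucc_injective n heq)

lemma exists_del {c : ℕ} (hc : 1 ≤ c) (G : SimpleGraph V) (hG : c ≤ chi G) :
    ∃ H : SimpleGraph V, chi H = c ∧ H.cliqueNum ≤ G.cliqueNum := by
  classical
  suffices key : ∀ E : ℕ, ∀ G : SimpleGraph V, G.edgeSet.ncard = E → c ≤ chi G →
      ∃ H : SimpleGraph V, chi H = c ∧ H.cliqueNum ≤ G.cliqueNum from
    key _ G rfl hG
  intro E
  induction E using Nat.strong_induction_on with
  | _ E ih =>
    intro G hE hcG
    by_cases heq : chi G = c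
    · exact ⟨G, heq, le_refl _⟩
    · have h2 : c + 1 ≤ chi G := by omega
      have hGne : G ≠ ⊥ := by
        rintro rfl
        have : (⊥ : SimpleGraph V).Colorable 1 := ⟨Coloring.mk 0 (by simp)⟩
        have := chi_le_of_colorable this
        omega
      obtain ⟨e, he⟩ := (edgeSet_nonempty (G := G)).2 hGne
      induction e using Sym2.ind with
      | _ u v =>
        rw [mem_edgeSet] at he
        set G' := G \ fromEdgeSet {s(u, v)} with hG'
        have hnadj : ¬ G'.Adj u v := by
          rw [hG', sdiff_adj]
          rintro ⟨-, hn⟩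
          exact hn (by rw [fromEdgeSet_adj]; exact ⟨rfl, he.ne⟩)
        have hle : G' ≤ G := sdiff_le
        have hlt : G'.edgeSet.ncard < G.edgeSet.ncard := by
          refine Set.ncard_lt_ncard ?_ G.edgeSet.toFinite
          refine ⟨edgeSet_mono hle, fun hsub => hnadj ?_⟩
          have := hsub ((mem_edgeSet G).2 he)
          rwa [mem_edgeSet] at this
        have hcG' : c ≤ chi G' := by
          have := chi_le_of_colorable (colorable_succ_of_delete he (chi_colorable G'))
          omega
        obtain ⟨H, hH1, hH2⟩ := ih G'.edgeSet.ncard (hE ▸ hlt) G' rfl hcG'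
        exact ⟨H, hH1, hH2.trans (cliqueNum_mono hle)⟩

end del

lemma exists_join (a b n : ℕ) (h : a + b = n) (G₁ : SimpleGraph (Fin a))
    (G₂ : SimpleGraph (Fin b)) :
    ∃ H : SimpleGraph (Fin n), H.cliqueNum ≤ G₁.cliqueNum + G₂.cliqueNum ∧
      chi G₁ + chi G₂ ≤ chi H := by
  subst h
  let e : Fin (a + b) ≃ Fin a ⊕ Fin b := finSumFinEquiv.symm
  let J := joinGraph G₁ G₂
  have iso : J.comap e.toEmbedding ≃g J := Iso.comap e J
  refine ⟨J.comap e.toEmbedding, ?_, ?_⟩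
  · exact (cliqueNum_le_of_iso iso).trans (joinGraph_cliqueNum_le G₁ G₂)
  · rw [chi_eq_of_iso iso]
    exact joinGraph_chi_ge G₁ G₂

lemma cliqueNum_le_one_of_bot {V : Type*} [Fintype V] : (⊥ : SimpleGraph V).cliqueNum ≤ 1 := by
  obtain ⟨s, hs⟩ := (⊥ : SimpleGraph V).exists_isNClique_cliqueNum
  rw [← hs.card_eq]
  by_contra hlt
  push_neg at hlt
  obtain ⟨a, ha, b, hb, hab⟩ := Finset.one_lt_card.1 hlt
  exact hs.isClique ha hb hab

lemma invRamsey_exists (N α : ℕ) (hα : 1 ≤ α) :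
    ∃ G : SimpleGraph (Fin N), _root_.indepNum G ≤ α ∧ G.cliqueNum = invRamsey N α := by
  have hne : {w | ∃ G : SimpleGraph (Fin N), _root_.indepNum G ≤ α ∧ G.cliqueNum = w}.Nonempty := by
    refine ⟨(⊤ : SimpleGraph (Fin N)).cliqueNum, ⊤, ?_, rfl⟩
    unfold _root_.indepNum
    rw [compl_top]
    exact cliqueNum_le_one_of_bot.trans hα
  exact Nat.sInf_mem hne

lemma qfun_exists (β α : ℕ) :
    ∃ L : List ℕ, (∀ b ∈ L, 0 < b) ∧ L.sum = β ∧
      (L.map fun b => invRamsey (α * b) α).sum = qfun β α := by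
  have hne : {s | ∃ L : List ℕ, (∀ b ∈ L, 0 < b) ∧ L.sum = β ∧
      (L.map fun b => invRamsey (α * b) α).sum = s}.Nonempty := by
    rcases Nat.eq_zero_or_pos β with rfl | hβ
    · exact ⟨0, [], by simp⟩
    · exact ⟨invRamsey (α * β) α, [β], by simp [hβ]⟩
  exact Nat.sInf_mem hne

lemma cliqueNum_of_isEmpty {V : Type*} [Fintype V] [IsEmpty V] (G : SimpleGraph V) :
    G.cliqueNum = 0 := by
  obtain ⟨s, hs⟩ := G.exists_isNClique_cliqueNum
  rw [← hs.card_eq, Finset.eq_empty_of_isEmpty s, Finset.card_empty]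

lemma listJoin (α : ℕ) (hα : 1 ≤ α) (L : List ℕ) :
    ∃ H : SimpleGraph (Fin (α * L.sum)),
      H.cliqueNum ≤ (L.map fun b => invRamsey (α * b) α).sum ∧ L.sum ≤ chi H := by
  induction L with
  | nil =>
    haveI : IsEmpty (Fin (α * List.sum [])) := by
      rw [List.sum_nil, Nat.mul_zero]; infer_instance
    exact ⟨⊥, by simp [cliqueNum_of_isEmpty], by simp⟩
  | cons b L ihL =>
    obtain ⟨H₂, hH₂c, hH₂χ⟩ := ihL
    obtain ⟨G, hGind, hGcl⟩ := invRamsey_exists (α * b) α hα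
    have hGχ : b ≤ chi G := by
      have h1 : α * b ≤ chi G * _root_.indepNum G := by
        simpa using card_le_chi_mul_indep G
      have h2 : chi G * _root_.indepNum G ≤ chi G * α := Nat.mul_le_mul_left _ hGind
      have h3 : α * b ≤ chi G * α := h1.trans h2
      have h4 : α * b ≤ α * chi G := by rwa [Nat.mul_comm (chi G) α] at h3
      exact Nat.le_of_mul_le_mul_left h4 (by omega)
    obtain ⟨H, hHc, hHχ⟩ := exists_join (α * b) (α * L.sum) (α * (b :: L).sum)
      (by rw [List.sum_cons, Nat.mul_add]) G H₂
    refine ⟨H, ?_, ?_⟩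
    · exact hHc.trans (Nat.add_le_add (le_of_eq hGcl) hH₂c)
    · exact (Nat.add_le_add hGχ hH₂χ).trans hHχ

theorem stmt_17 (r : ℝ) (hr0 : 0 < r) (hr1 : r ≤ 1) (hint : ¬ ∃ z : ℤ, (1 / r : ℝ) = z)
    (k : ℕ) (hk : k = ⌊1 / r⌋₊) :
    ∃ N : ℕ, ∀ n ≥ N, ∀ m l : ℕ, m = n - k * ⌈r * n⌉₊ → l = (k + 1) * ⌈r * n⌉₊ - n →
      Q n ⌈r * n⌉₊ ≤ qfun l k + qfun m (k + 1) := by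
  have hrpos : (0:ℝ) < 1 / r := by positivity
  have hk1 : 1 ≤ k := by
    rw [hk]
    exact Nat.le_floor (by rw [Nat.cast_one]; rw [le_div_iff₀ hr0]; linarith)
  have hkr : (k : ℝ) < 1 / r := by
    have h1 : (k : ℝ) ≤ 1 / r := by rw [hk]; exact Nat.floor_le hrpos.le
    rcases h1.lt_or_eq with h | h
    · exact h
    · exact absurd ⟨(k : ℤ), by rw [← h]; simp⟩ hint
  have hkr1 : (k : ℝ) * r < 1 := by rwa [lt_div_iff₀ hr0] at hkr
  have hk2 : (1:ℝ) / r < k + 1 := by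
    rw [hk]; exact Nat.lt_floor_add_one (1 / r)
  have hk2r : (1:ℝ) < (k + 1) * r := by rwa [div_lt_iff₀ hr0] at hk2
  set ε : ℝ := 1 - k * r with hεdef
  have hε : 0 < ε := by simp [hεdef]; linarith
  refine ⟨⌈((k:ℝ) + 1) / ε⌉₊ + 1, ?_⟩
  intro n hn m l hm hl
  set c := ⌈r * n⌉₊ with hcdef
  have hn1 : 1 ≤ n := by omega
  have hnR : ((k:ℝ) + 1) / ε ≤ n := by
    calc ((k:ℝ) + 1) / ε ≤ ⌈((k:ℝ) + 1) / ε⌉₊ := Nat.le_ceil _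
      _ ≤ n := by exact_mod_cast Nat.cast_le.mpr (by omega : (⌈((k:ℝ) + 1) / ε⌉₊ : ℕ) ≤ n)
  have hnε : (k:ℝ) + 1 ≤ n * ε := by rwa [div_le_iff₀ hε] at hnR
  have hrn_pos : (0:ℝ) < r * n := by
    have : (1:ℝ) ≤ n := by exact_mod_cast hn1
    nlinarith
  have hc1 : 1 ≤ c := Nat.ceil_pos.mpr hrn_pos
  have hcge : r * n ≤ (c : ℝ) := Nat.le_ceil _
  have hcle : (c : ℝ) ≤ r * n + 1 := (Nat.ceil_lt_add_one hrn_pos.le).le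
  have hkc : k * c ≤ n := by
    have : ((k * c : ℕ) : ℝ) ≤ n := by
      push_cast
      have hnn : (0:ℝ) ≤ (k:ℝ) := by positivity
      nlinarith [hnε, hcle, hε]
    exact_mod_cast this
  have hnc : n ≤ (k + 1) * c := by
    have : ((n : ℕ) : ℝ) ≤ (((k + 1) * c : ℕ) : ℝ) := by
      push_cast
      nlinarith [hcge, hk2r, Nat.cast_nonneg (α := ℝ) n]
    exact_mod_cast this
  -- discrete arithmetic
  have hb : (k + 1) * c = k * c + c := by ring
  set a := k * c with hadef
  set b := (k + 1) * c with hbdef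
  have hlm : l + m = c := by omega
  have hn' : k * l + (k + 1) * m = n := by
    have h2 : k * l + (k + 1) * m = k * (l + m) + m := by ring
    rw [h2, hlm, ← hadef]
    omega
  obtain ⟨L₁, -, hs1, hq1⟩ := qfun_exists l k
  obtain ⟨L₂, -, hs2, hq2⟩ := qfun_exists m (k + 1)
  obtain ⟨H₁, hω1, hχ1⟩ := listJoin k hk1 L₁
  obtain ⟨H₂, hω2, hχ2⟩ := listJoin (k + 1) (by omega) L₂
  obtain ⟨H, hHω, hHχ⟩ := exists_join (k * L₁.sum) ((k + 1) * L₂.sum) n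
    (by rw [hs1, hs2]; exact hn') H₁ H₂
  have hχ : c ≤ chi H := by
    have := Nat.add_le_add hχ1 hχ2
    omega
  have hω : H.cliqueNum ≤ qfun l k + qfun m (k + 1) :=
    hHω.trans (Nat.add_le_add (hω1.trans (le_of_eq hq1)) (hω2.trans (le_of_eq hq2)))
  obtain ⟨H', hH'χ, hH'ω⟩ := exists_del hc1 H hχ
  have hQ : Q n c ≤ H'.cliqueNum := Nat.sInf_le ⟨H', hH'χ, rfl⟩
  exact hQ.trans (hH'ω.trans hω)
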